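/- Let β_L > β_R > 0. Then lim_{E→∞} (1/E)·ln((2e^{(β_L + β_R)E} − e^{β_L E} − e^{β_R E})/(e^{β_L E} + e^{β_R E} − 2)) = β_R. Consequently the detailed balance effective temperature T̂_{N,0}^{(β_L,β_R)}(E) = E/ln(A(E)) of a detector at rest in the NESS converges to 1/β_R = 1/min(β_L, β_R) as E → ∞. -/

import Mathlib

open Real Filter

/-- For `β_L > β_R > 0`,
`lim_{E→∞} (1/E)·ln((2e^{(β_L+β_R)E} − e^{β_L E} − e^{β_R E})/(e^{β_L E} + e^{β_R E} − 2))
  = β_R`, and consequently the detailed balance effective temperature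
`T̂_{N,0}^{(β_L,β_R)}(E) = E/ln(A(E))` converges to `1/β_R = 1/min(β_L, β_R)` as `E → ∞`. -/
theorem stmt16 (βL βR : ℝ) (hR : 0 < βR) (h : βR < βL) :
    Tendsto (fun E : ℝ => (1 / E) * Real.log
        ((2 * Real.exp ((βL + βR) * E) - Real.exp (βL * E) - Real.exp (βR * E)) /
          (Real.exp (βL * E) + Real.exp (βR * E) - 2)))
      atTop (nhds βR) ∧
    Tendsto (fun E : ℝ => E / Real.log
        ((2 * Real.exp ((βL + βR) * E) - Real.exp (βL * E) - Real.exp (βR * E)) /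
          (Real.exp (βL * E) + Real.exp (βR * E) - 2)))
      atTop (nhds (1 / min βL βR)) := by
  have hL : 0 < βL := hR.trans h
  set Q : ℝ → ℝ := fun E =>
    (2 - Real.exp (-(βR * E)) - Real.exp (-(βL * E))) /
      (1 + Real.exp ((βR - βL) * E) - 2 * Real.exp (-(βL * E))) with hQ
  -- exponential limits
  have e1 : Tendsto (fun E : ℝ => Real.exp (-(βR * E))) atTop (nhds 0) := by
    apply Real.tendsto_exp_atBot.comp
    have : Tendsto (fun E : ℝ => βR * E) atTop atTop :=
      Tendsto.const_mul_atTop hR tendsto_id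
    exact tendsto_neg_atBot_iff.mpr this
  have e2 : Tendsto (fun E : ℝ => Real.exp (-(βL * E))) atTop (nhds 0) := by
    apply Real.tendsto_exp_atBot.comp
    have : Tendsto (fun E : ℝ => βL * E) atTop atTop :=
      Tendsto.const_mul_atTop hL tendsto_id
    exact tendsto_neg_atBot_iff.mpr this
  have e3 : Tendsto (fun E : ℝ => Real.exp ((βR - βL) * E)) atTop (nhds 0) := by
    have h'' : Tendsto (fun E : ℝ => (βL - βR) * E) atTop atTop :=
      Tendsto.const_mul_atTop (by linarith) tendsto_id
    have := Real.tendsto_exp_atBot.comp (tendsto_neg_atBot_iff.mpr h'')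
    refine this.congr fun E => ?_
    simp only [Function.comp]
    congr 1
    ring
  have hQt : Tendsto Q atTop (nhds 2) := by
    have hN : Tendsto (fun E : ℝ => 2 - Real.exp (-(βR * E)) - Real.exp (-(βL * E)))
        atTop (nhds 2) := by
      have := (tendsto_const_nhds (x := (2:ℝ)) (f := atTop)).sub e1 |>.sub e2
      simpa using this
    have hD : Tendsto (fun E : ℝ => 1 + Real.exp ((βR - βL) * E) - 2 * Real.exp (-(βL * E)))
        atTop (nhds 1) := by
      have := ((tendsto_const_nhds (x := (1:ℝ)) (f := atTop)).add e3).sub (e2.const_mul 2)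
      simpa using this
    have := hN.div hD one_ne_zero
    rw [div_one] at this
    exact this
  -- eventual equality
  have heq : (fun E : ℝ => (1 / E) * Real.log
        ((2 * Real.exp ((βL + βR) * E) - Real.exp (βL * E) - Real.exp (βR * E)) /
          (Real.exp (βL * E) + Real.exp (βR * E) - 2)))
      =ᶠ[atTop] (fun E => βR + Real.log (Q E) * (1 / E)) := by
    filter_upwards [eventually_gt_atTop 0] with E hE
    have ha1 : (1:ℝ) < Real.exp (βL * E) := by
      rw [Real.one_lt_exp_iff]; positivity
    have hb1 : (1:ℝ) < Real.exp (βR * E) := by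
      rw [Real.one_lt_exp_iff]; positivity
    have hab : Real.exp (βL * E) < Real.exp ((βL + βR) * E) := by
      apply Real.exp_lt_exp.mpr; nlinarith
    have hba : Real.exp (βR * E) < Real.exp ((βL + βR) * E) := by
      apply Real.exp_lt_exp.mpr; nlinarith
    have hD : 0 < Real.exp (βL * E) + Real.exp (βR * E) - 2 := by linarith
    have hN : 0 < 2 * Real.exp ((βL + βR) * E) - Real.exp (βL * E) - Real.exp (βR * E) := by
      linarith
    have hQE : 0 < Q E := by
      rw [hQ]
      apply div_pos
      · have h1 : Real.exp (-(βR * E)) < 1 := by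
          rw [Real.exp_lt_one_iff]; nlinarith
        have h2 : Real.exp (-(βL * E)) < 1 := by
          rw [Real.exp_lt_one_iff]; nlinarith
        linarith
      · have := div_pos hD (Real.exp_pos (βL * E))
        have hrw : (Real.exp (βL * E) + Real.exp (βR * E) - 2) / Real.exp (βL * E)
            = 1 + Real.exp ((βR - βL) * E) - 2 * Real.exp (-(βL * E)) := by
          rw [Real.exp_neg, sub_mul, Real.exp_sub]
          field_simp
        linarith [hrw ▸ this]
    have hfQ : (2 * Real.exp ((βL + βR) * E) - Real.exp (βL * E) - Real.exp (βR * E)) /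
          (Real.exp (βL * E) + Real.exp (βR * E) - 2) = Real.exp (βR * E) * Q E := by
      simp only [hQ]
      rw [Real.exp_neg, Real.exp_neg, sub_mul, Real.exp_sub, add_mul, Real.exp_add]
      field_simp
    rw [hfQ, Real.log_mul (Real.exp_ne_zero _) (ne_of_gt hQE), Real.log_exp]
    field_simp
  have part1 : Tendsto (fun E : ℝ => (1 / E) * Real.log
        ((2 * Real.exp ((βL + βR) * E) - Real.exp (βL * E) - Real.exp (βR * E)) /
          (Real.exp (βL * E) + Real.exp (βR * E) - 2)))
      atTop (nhds βR) := by
    have hlogQ : Tendsto (fun E => Real.log (Q E)) atTop (nhds (Real.log 2)) :=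
      (Real.continuousAt_log (by norm_num)).tendsto.comp hQt
    have : Tendsto (fun E : ℝ => βR + Real.log (Q E) * (1 / E)) atTop (nhds βR) := by
      have hinv : Tendsto (fun E : ℝ => 1 / E) atTop (nhds 0) := by
        simpa [one_div] using tendsto_inv_atTop_zero (𝕜 := ℝ)
      have := (tendsto_const_nhds (x := βR) (f := atTop)).add (hlogQ.mul hinv)
      simpa using this
    exact this.congr' heq.symm
  refine ⟨part1, ?_⟩
  have h2 := part1.inv₀ (ne_of_gt hR)
  have : (1 : ℝ) / min βL βR = βR⁻¹ := by
    rw [min_eq_right h.le, one_div]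
  rw [this]
  refine h2.congr fun E => ?_
  rw [one_div_mul_eq_div, inv_div]
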